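/- For all real parameters η > 0 and φ > 0, the variance of the PCD satisfies (∑_{x=0}^∞ x²·p(x)) − (∑_{x=0}^∞ x·p(x))² = (η³ + (5φ+1)η² + 2φ(2φ+7)η + 4φ²)/(η²(φ+η)²). -/

import Mathlib

lemma hasSum_asc (k : ℕ) {r : ℝ} (hr : |r| < 1) :
    HasSum (fun n : ℕ => ((n + 1).ascFactorial k : ℝ) * r ^ n)
      ((k.factorial : ℝ) / (1 - r) ^ (k + 1)) := by
  have h := (hasSum_choose_mul_geometric_of_norm_lt_one (𝕜 := ℝ) k (by simpa using hr)).mul_left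
    (k.factorial : ℝ)
  have hfun : (fun n : ℕ => (k.factorial : ℝ) * (((n + k).choose k : ℝ) * r ^ n))
      = fun n : ℕ => ((n + 1).ascFactorial k : ℝ) * r ^ n := by
    funext n
    rw [Nat.ascFactorial_eq_factorial_mul_choose]
    push_cast
    ring
  rw [hfun] at h
  convert h using 1
  · rfl
  rw [mul_one_div]

lemma hasSum_poly {r : ℝ} (hr : |r| < 1) (c0 c1 c2 c3 c4 c5 : ℝ) :
    HasSum (fun n : ℕ =>
      (c0 + c1 * ((n : ℝ) + 1) + c2 * (((n : ℝ) + 1) * ((n : ℝ) + 2))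
        + c3 * (((n : ℝ) + 1) * ((n : ℝ) + 2) * ((n : ℝ) + 3))
        + c4 * (((n : ℝ) + 1) * ((n : ℝ) + 2) * ((n : ℝ) + 3) * ((n : ℝ) + 4))
        + c5 * (((n : ℝ) + 1) * ((n : ℝ) + 2) * ((n : ℝ) + 3) * ((n : ℝ) + 4) * ((n : ℝ) + 5)))
        * r ^ n)
      (c0 / (1 - r) + c1 / (1 - r) ^ 2 + 2 * c2 / (1 - r) ^ 3 + 6 * c3 / (1 - r) ^ 4
        + 24 * c4 / (1 - r) ^ 5 + 120 * c5 / (1 - r) ^ 6) := by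
  have h := ((((((hasSum_asc 0 hr).mul_left c0).add ((hasSum_asc 1 hr).mul_left c1)).add
    ((hasSum_asc 2 hr).mul_left c2)).add ((hasSum_asc 3 hr).mul_left c3)).add
    ((hasSum_asc 4 hr).mul_left c4)).add ((hasSum_asc 5 hr).mul_left c5)
  convert h using 1
  · rfl
  · funext n
    simp only [Nat.ascFactorial, Nat.factorial]
    push_cast
    ring
  · simp only [Nat.factorial]
    push_cast
    ring

/-- The variance of the PCD. -/
theorem pcd_variance (η φ : ℝ) (hη : 0 < η) (hφ : 0 < φ) :
    (∑' x : ℕ, (x : ℝ) ^ 2 *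
        ((η ^ 2 / ((φ + η) * (1 + η) ^ (x + 4)))
          * ((1 + η) ^ 3
            + (φ * η ^ 2 / 6) * ((x : ℝ) + 1) * ((x : ℝ) + 2) * ((x : ℝ) + 3))))
      - (∑' x : ℕ, (x : ℝ) *
        ((η ^ 2 / ((φ + η) * (1 + η) ^ (x + 4)))
          * ((1 + η) ^ 3
            + (φ * η ^ 2 / 6) * ((x : ℝ) + 1) * ((x : ℝ) + 2) * ((x : ℝ) + 3)))) ^ 2
      = (η ^ 3 + (5 * φ + 1) * η ^ 2 + 2 * φ * (2 * φ + 7) * η + 4 * φ ^ 2)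
          / (η ^ 2 * (φ + η) ^ 2) := by
  have h1η : (0 : ℝ) < 1 + η := by linarith
  have hφη : (0 : ℝ) < φ + η := by linarith
  set r : ℝ := (1 + η)⁻¹ with hrdef
  have hr : |r| < 1 := by
    rw [abs_of_pos (by positivity)]
    rw [inv_lt_one_iff₀]
    right; linarith
  have h1r : 1 - r = η / (1 + η) := by
    rw [hrdef]
    field_simp
    ring
  set P : ℝ := η ^ 2 / ((φ + η) * (1 + η)) with hP
  set Q : ℝ := φ * η ^ 4 / (6 * (φ + η) * (1 + η) ^ 4) with hQ
  have hpow : ∀ x : ℕ, (1 + η) ^ (x + 4) = (1 + η) ^ x * (1 + η) ^ 4 := fun x => pow_add _ _ _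
  have hpx : ∀ x : ℕ, (0 : ℝ) < (1 + η) ^ x := fun x => pow_pos h1η x
  -- mean
  have H1 : HasSum (fun x : ℕ => (x : ℝ) *
        ((η ^ 2 / ((φ + η) * (1 + η) ^ (x + 4)))
          * ((1 + η) ^ 3
            + (φ * η ^ 2 / 6) * ((x : ℝ) + 1) * ((x : ℝ) + 2) * ((x : ℝ) + 3))))
      ((η + 4 * φ) / (η * (φ + η))) := by
    have h := hasSum_poly hr (-P) P 0 (-4 * Q) Q 0
    have hfun : (fun x : ℕ => (x : ℝ) *
        ((η ^ 2 / ((φ + η) * (1 + η) ^ (x + 4)))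
          * ((1 + η) ^ 3
            + (φ * η ^ 2 / 6) * ((x : ℝ) + 1) * ((x : ℝ) + 2) * ((x : ℝ) + 3))))
        = fun x : ℕ =>
      (-P + P * ((x : ℝ) + 1) + 0 * (((x : ℝ) + 1) * ((x : ℝ) + 2))
        + (-4 * Q) * (((x : ℝ) + 1) * ((x : ℝ) + 2) * ((x : ℝ) + 3))
        + Q * (((x : ℝ) + 1) * ((x : ℝ) + 2) * ((x : ℝ) + 3) * ((x : ℝ) + 4))
        + 0 * (((x : ℝ) + 1) * ((x : ℝ) + 2) * ((x : ℝ) + 3) * ((x : ℝ) + 4) * ((x : ℝ) + 5)))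
        * r ^ x := by
      funext x
      rw [hP, hQ, hpow x, hrdef, inv_pow]
      have := (hpx x).ne'
      field_simp
      ring
    have hval : (-P) / (1 - r) + P / (1 - r) ^ 2 + 2 * 0 / (1 - r) ^ 3
        + 6 * (-4 * Q) / (1 - r) ^ 4 + 24 * Q / (1 - r) ^ 5 + 120 * 0 / (1 - r) ^ 6
        = (η + 4 * φ) / (η * (φ + η)) := by
      rw [h1r, hP, hQ]
      field_simp
      ring
    rw [hfun, ← hval]
    exact h
  -- second moment
  have H2 : HasSum (fun x : ℕ => (x : ℝ) ^ 2 *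
        ((η ^ 2 / ((φ + η) * (1 + η) ^ (x + 4)))
          * ((1 + η) ^ 3
            + (φ * η ^ 2 / 6) * ((x : ℝ) + 1) * ((x : ℝ) + 2) * ((x : ℝ) + 3))))
      ((η * (η + 2) + 4 * φ * (η + 5)) / (η ^ 2 * (φ + η))) := by
    have h := hasSum_poly hr P (-3 * P) P (16 * Q) (-9 * Q) Q
    have hfun : (fun x : ℕ => (x : ℝ) ^ 2 *
        ((η ^ 2 / ((φ + η) * (1 + η) ^ (x + 4)))
          * ((1 + η) ^ 3
            + (φ * η ^ 2 / 6) * ((x : ℝ) + 1) * ((x : ℝ) + 2) * ((x : ℝ) + 3))))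
        = fun x : ℕ =>
      (P + (-3 * P) * ((x : ℝ) + 1) + P * (((x : ℝ) + 1) * ((x : ℝ) + 2))
        + (16 * Q) * (((x : ℝ) + 1) * ((x : ℝ) + 2) * ((x : ℝ) + 3))
        + (-9 * Q) * (((x : ℝ) + 1) * ((x : ℝ) + 2) * ((x : ℝ) + 3) * ((x : ℝ) + 4))
        + Q * (((x : ℝ) + 1) * ((x : ℝ) + 2) * ((x : ℝ) + 3) * ((x : ℝ) + 4) * ((x : ℝ) + 5)))
        * r ^ x := by
      funext x
      rw [hP, hQ, hpow x, hrdef, inv_pow]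
      have := (hpx x).ne'
      field_simp
      ring
    have hval : P / (1 - r) + (-3 * P) / (1 - r) ^ 2 + 2 * P / (1 - r) ^ 3
        + 6 * (16 * Q) / (1 - r) ^ 4 + 24 * (-9 * Q) / (1 - r) ^ 5 + 120 * Q / (1 - r) ^ 6
        = (η * (η + 2) + 4 * φ * (η + 5)) / (η ^ 2 * (φ + η)) := by
      rw [h1r, hP, hQ]
      field_simp
      ring
    rw [hfun, ← hval]
    exact h
  rw [H1.tsum_eq, H2.tsum_eq]
  field_simp
  ring
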